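/- The FRT relation Rt₁t₂ = t₂t₁R for the 9×9 R-matrix of the deformed oscillator, applied to the diagonal quantum matrix t of the five-parameter subgroup t = [[K₁,0,0],[0,K₁*,0],[K₂,K₂*,L₂]], is equivalent to the six relations K₁K₁* = K₁*K₁, K₁K₂ = qQ₁⁻¹K₂K₁, K₁K₂* = q⁻¹Q₁K₂*K₁, K₁L₂ = L₂K₁, K₂K₂* = Q₁K₂*K₂ − K₁*K₁ + L₂², K₂L₂ = qL₂K₂, together with their *-conjugates. -/

import Mathlib

set_option maxHeartbeats 4000000 in
private lemma smul_aux {F : Type*} [Field F] {A : Type*} [AddCommMonoid A] [Module F A]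
    {a b e : F} (ha : a ≠ 0) (hab : a * e = b) {x y : A} (h : a • x = b • y) :
    x = e • y := by
  subst hab
  have h2 : a⁻¹ • a • x = a⁻¹ • (a * e) • y := by rw [h]
  rwa [smul_smul, smul_smul, inv_mul_cancel₀ ha, one_smul, ← mul_assoc,
    inv_mul_cancel₀ ha, one_mul] at h2

/-- The 9×9 R-matrix of the deformed oscillator covariance,
rows/columns indexed by pairs from `Fin 3` (0,1,2 standing for 1,2,3). -/
noncomputable def Rmat {K : Type*} [Field K] (q Q1 : K) :
    Matrix (Fin 3 × Fin 3) (Fin 3 × Fin 3) K := fun r c =>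
  if r = ((0 : Fin 3), (0 : Fin 3)) ∧ c = ((0 : Fin 3), (0 : Fin 3)) then 1
  else if r = (0, 1) ∧ c = (0, 1) then Q1 ^ 2 / q ^ 2
  else if r = (0, 2) ∧ c = (0, 2) then Q1 / q
  else if r = (1, 0) ∧ c = (0, 1) then (q ^ 2 - Q1) / q ^ 2
  else if r = (1, 0) ∧ c = (1, 0) then 1 / Q1
  else if r = (1, 1) ∧ c = (1, 1) then 1
  else if r = (1, 2) ∧ c = (1, 2) then 1 / q
  else if r = (1, 2) ∧ c = (2, 1) then (q ^ 2 - Q1) / q ^ 2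
  else if r = (2, 0) ∧ c = (0, 2) then (q ^ 2 - Q1) / q ^ 2
  else if r = (2, 0) ∧ c = (2, 0) then 1 / q
  else if r = (2, 1) ∧ c = (2, 1) then Q1 / q
  else if r = (2, 2) ∧ c = (0, 1) then Q1 / q ^ 2
  else if r = (2, 2) ∧ c = (1, 0) then -(1 / Q1)
  else if r = (2, 2) ∧ c = (2, 2) then 1
  else 0

set_option maxHeartbeats 16000000 in
/-- for the five-parameter subgroup quantum matrix
`t = [[K₁,0,0],[0,K₁*,0],[K₂,K₂*,L₂]]`, the FRT relation `R t₁ t₂ = t₂ t₁ R`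
(with `t₁ = t ⊗ 1`, `t₂ = 1 ⊗ t` and `R` the 9×9 oscillator R-matrix) is
equivalent to the six listed relations together with their *-conjugates. -/
theorem five_param_FRT_equivalence {F : Type*} [Field F] {A : Type*} [Ring A]
    [Algebra F A] (q Q1 : F) (hq : q ≠ 0) (hQ1 : Q1 ≠ 0)
    (K1 K1s K2 K2s L2 : A) :
    (letI t : Matrix (Fin 3) (Fin 3) A := !![K1, 0, 0; 0, K1s, 0; K2, K2s, L2]
     letI t1 : Matrix (Fin 3 × Fin 3) (Fin 3 × Fin 3) A :=
       fun r c => t r.1 c.1 * (if r.2 = c.2 then 1 else 0)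
     letI t2 : Matrix (Fin 3 × Fin 3) (Fin 3 × Fin 3) A :=
       fun r c => (if r.1 = c.1 then 1 else 0) * t r.2 c.2
     (Rmat q Q1).map (algebraMap F A) * (t1 * t2) =
       (t2 * t1) * (Rmat q Q1).map (algebraMap F A)) ↔
    (K1 * K1s = K1s * K1 ∧
     K1 * K2 = (q * Q1⁻¹) • (K2 * K1) ∧
     K1 * K2s = (q⁻¹ * Q1) • (K2s * K1) ∧
     K1 * L2 = L2 * K1 ∧
     K2 * K2s = Q1 • (K2s * K2) - K1s * K1 + L2 ^ 2 ∧
     K2 * L2 = q • (L2 * K2) ∧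
     -- *-conjugates
     K2s * K1s = (q * Q1⁻¹) • (K1s * K2s) ∧
     K2 * K1s = (q⁻¹ * Q1) • (K1s * K2) ∧
     L2 * K1s = K1s * L2 ∧
     L2 * K2s = q • (K2s * L2)) := by
  have hq2 : q ^ 2 ≠ 0 := pow_ne_zero 2 hq
  have hdiv : Q1 / q ≠ 0 := div_ne_zero hQ1 hq
  have hdiv2 : Q1 ^ 2 / q ^ 2 ≠ 0 := div_ne_zero (pow_ne_zero 2 hQ1) hq2
  have hm : ∀ (M N : Fin 3 × Fin 3 → Fin 3 × Fin 3 → A) i k,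
      @HMul.hMul (Matrix (Fin 3 × Fin 3) (Fin 3 × Fin 3) A) (Matrix (Fin 3 × Fin 3) (Fin 3 × Fin 3) A)
        (Matrix (Fin 3 × Fin 3) (Fin 3 × Fin 3) A) _ M N i k
        = ∑ j, M i j * N j k := fun _ _ _ _ => Matrix.mul_apply
  constructor
  · intro h
    have e1 := congrFun (congrFun h ((0,1) : Fin 3 × Fin 3)) ((0,1) : Fin 3 × Fin 3)
    have e2 := congrFun (congrFun h ((0,2) : Fin 3 × Fin 3)) ((0,0) : Fin 3 × Fin 3)
    have e3 := congrFun (congrFun h ((0,2) : Fin 3 × Fin 3)) ((0,1) : Fin 3 × Fin 3)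
    have e4 := congrFun (congrFun h ((0,2) : Fin 3 × Fin 3)) ((0,2) : Fin 3 × Fin 3)
    have e5 := congrFun (congrFun h ((2,2) : Fin 3 × Fin 3)) ((1,0) : Fin 3 × Fin 3)
    have e6 := congrFun (congrFun h ((2,2) : Fin 3 × Fin 3)) ((2,0) : Fin 3 × Fin 3)
    have e7 := congrFun (congrFun h ((2,1) : Fin 3 × Fin 3)) ((1,1) : Fin 3 × Fin 3)
    have e8 := congrFun (congrFun h ((2,1) : Fin 3 × Fin 3)) ((0,1) : Fin 3 × Fin 3)
    have e9 := congrFun (congrFun h ((2,1) : Fin 3 × Fin 3)) ((2,1) : Fin 3 × Fin 3)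
    have e10 := congrFun (congrFun h ((2,2) : Fin 3 × Fin 3)) ((1,2) : Fin 3 × Fin 3)
    simp [hm, Matrix.mul_apply, Fintype.sum_prod_type, Fin.sum_univ_three, Rmat,
      Matrix.map_apply, -Prod.mk_zero_zero, -Prod.mk_one_one]
      at e1 e2 e3 e4 e5 e6 e7 e8 e9 e10
    simp only [← Algebra.commutes, ← Algebra.smul_def, smul_smul]
      at e1 e2 e3 e4 e5 e6 e7 e8 e9 e10
    -- e1 : (Q1 ^ 2 / q ^ 2) • (K1 * K1s) = (Q1 ^ 2 / q ^ 2) • (K1s * K1)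
    -- e2 : (Q1 / q) • (K1 * K2) = K2 * K1
    -- e3 : (Q1 / q) • (K1 * K2s) = (Q1 ^ 2 / q ^ 2) • (K2s * K1)
    -- e4 : (Q1 / q) • (K1 * L2) = (Q1 / q) • (L2 * K1)
    -- e5 : -(Q1⁻¹ • (K1s * K1)) + K2s * K2 = Q1⁻¹ • (K2 * K2s) + -(Q1⁻¹ • (L2 * L2))
    -- e6 : L2 * K2 = q⁻¹ • (K2 * L2)
    -- e7 : (Q1 / q) • (K2s * K1s) = K1s * K2s
    -- e8 : (Q1 / q) • (K2 * K1s) = (Q1 ^ 2 / q ^ 2) • (K1s * K2)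
    -- e9 : (Q1 / q) • (L2 * K1s) = (Q1 / q) • (K1s * L2)
    -- e10 : K2s * L2 = q⁻¹ • (L2 * K2s)
    refine ⟨?_, ?_, ?_, ?_, ?_, ?_, ?_, ?_, ?_, ?_⟩
    · simpa using smul_aux hdiv2 (mul_one _) e1
    · refine smul_aux hdiv ?_ (by rw [one_smul]; exact e2)
      field_simp
    · refine smul_aux hdiv ?_ e3
      field_simp
    · simpa using smul_aux hdiv (mul_one _) e4
    · have h5' := congrArg (fun z => Q1 • z) e5
      simp only [smul_add, smul_neg, smul_smul, mul_inv_cancel₀ hQ1, one_smul] at h5'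
      have hz : (K2 * K2s + -(L2 * L2)) - (-(K1s * K1) + Q1 • (K2s * K2)) = 0 :=
        sub_eq_zero.mpr h5'.symm
      rw [← sub_eq_zero, pow_two, ← hz]
      abel
    · refine smul_aux (inv_ne_zero hq) (inv_mul_cancel₀ hq)
        (by rw [one_smul]; exact e6.symm)
    · refine smul_aux hdiv ?_ (by rw [one_smul]; exact e7)
      field_simp
    · refine smul_aux hdiv ?_ e8
      field_simp
    · simpa using smul_aux hdiv (mul_one _) e9
    · refine smul_aux (inv_ne_zero hq) (inv_mul_cancel₀ hq)
        (by rw [one_smul]; exact e10.symm)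
  · rintro ⟨h1, h2, h3, h4, h5, h6, h7, h8, h9, h10⟩
    ext ⟨a, b⟩ ⟨c, d⟩
    fin_cases a <;> fin_cases b <;> fin_cases c <;> fin_cases d <;>
      simp [hm, Matrix.mul_apply, Fintype.sum_prod_type, Fin.sum_univ_three, Rmat, Matrix.map_apply,
        h1, h2, h3, h4, h5, h6, h7, h8, h9, h10, -Prod.mk_zero_zero, -Prod.mk_one_one] <;>
      (try simp only [← Algebra.commutes, ← Algebra.smul_def, smul_smul, smul_sub, smul_add,
        mul_sub, mul_add, sub_eq_add_neg, pow_two]) <;>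
      (try (match_scalars <;> (field_simp; try ring)))
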